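/- Let m ≥ 1, let M ≥ 2 be an integer, let h₀ > 0 and 0 < h ≤ 1, and let g : {0,…,m−1} → ℝ satisfy |g(t)| ≤ h₀ hᵗ for all t. Define f_r(θ) = Σ_{t=0}^{m−1} g(t) cos(tθ) and ε = π h₀ · (Σ_{t=0}^{m−1} hᵗ) · (m−1)/(2M). Then for every θ ∈ [0, π] there exists an integer m' ∈ {0,…,M} such that |θ − m'π/M| ≤ π/(2M) and |f_r(θ) − f_r(m'π/M)| ≤ ε. -/

import Mathlib

lemma cos_lip (a b : ℝ) : |Real.cos a - Real.cos b| ≤ |a - b| := by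
  rw [Real.cos_sub_cos]
  rw [abs_mul, abs_mul, abs_neg, abs_two]
  calc 2 * |Real.sin ((a + b) / 2)| * |Real.sin ((a - b) / 2)|
      ≤ 2 * 1 * |(a - b) / 2| := by
        apply mul_le_mul (by nlinarith [Real.abs_sin_le_one ((a+b)/2)])
          (Real.abs_sin_le_abs) (abs_nonneg _) (by norm_num)
    _ = |a - b| := by rw [abs_div, abs_two]; ring

/-- Sampling lemma for `f_r`: under the decay constraint `|g(t)| ≤ h₀ hᵗ`,
every `θ ∈ [0, π]` is within `π/(2M)` of a sample frequency `m'π/M`, and the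
value of `f_r` there deviates from `f_r(θ)` by at most
`ε = π h₀ (∑ hᵗ)(m−1)/(2M)`. -/
theorem stmt12 (m M : ℕ) (hm : 1 ≤ m) (hM : 2 ≤ M) (h₀ h : ℝ)
    (hh₀ : 0 < h₀) (hh : 0 < h) (hh1 : h ≤ 1)
    (g : ℕ → ℝ) (hg : ∀ t < m, |g t| ≤ h₀ * h ^ t)
    (θ : ℝ) (hθ : θ ∈ Set.Icc 0 Real.pi) :
    ∃ m' : ℕ, m' ≤ M ∧ |θ - (m' : ℝ) * Real.pi / M| ≤ Real.pi / (2 * M) ∧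
      |(∑ t ∈ Finset.range m, g t * Real.cos (t * θ)) -
        ∑ t ∈ Finset.range m, g t * Real.cos (t * ((m' : ℝ) * Real.pi / M))| ≤
      Real.pi * h₀ * (∑ t ∈ Finset.range m, h ^ t) * ((m : ℝ) - 1) / (2 * M) := by
  obtain ⟨hθ0, hθπ⟩ := hθ
  have hπ := Real.pi_pos
  have hMpos : (0:ℝ) < M := by positivity
  set x : ℝ := θ * M / Real.pi with hx
  have hx0 : 0 ≤ x := by positivity
  have hxM : x ≤ M := by
    rw [hx, div_le_iff₀ hπ]
    nlinarith
  set n : ℕ := ⌊x + 1/2⌋₊ with hn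
  have h1 : (n : ℝ) ≤ x + 1/2 := Nat.floor_le (by linarith)
  have h2 : x + 1/2 < n + 1 := Nat.lt_floor_add_one _
  have hnM : n ≤ M := by
    have : (n:ℝ) < M + 1 := by linarith
    exact_mod_cast Nat.lt_add_one_iff.mp (by exact_mod_cast this)
  have hclose : |x - n| ≤ 1/2 := by rw [abs_le]; constructor <;> linarith
  have hθeq : θ = x * Real.pi / M := by field_simp [hx]; rw [hx, div_mul_cancel₀ _ hπ.ne']
  have hdist : |θ - (n : ℝ) * Real.pi / M| ≤ Real.pi / (2 * M) := by
    have heq : θ - (n : ℝ) * Real.pi / M = (x - n) * (Real.pi / M) := by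
      rw [hθeq]; field_simp
    rw [heq, abs_mul, abs_of_pos (by positivity : (0:ℝ) < Real.pi / M)]
    calc |x - n| * (Real.pi / M) ≤ (1/2) * (Real.pi / M) := by
          apply mul_le_mul_of_nonneg_right hclose (by positivity)
      _ = Real.pi / (2 * M) := by ring
  refine ⟨n, hnM, hdist, ?_⟩
  rw [← Finset.sum_sub_distrib]
  calc |∑ t ∈ Finset.range m, (g t * Real.cos (t * θ) - g t * Real.cos (t * ((n:ℝ) * Real.pi / M)))|
      ≤ ∑ t ∈ Finset.range m, |g t * Real.cos (t * θ) - g t * Real.cos (t * ((n:ℝ) * Real.pi / M))| :=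
        Finset.abs_sum_le_sum_abs _ _
    _ ≤ ∑ t ∈ Finset.range m, h₀ * h ^ t * ((m:ℝ) - 1) * (Real.pi / (2 * M)) := by
        apply Finset.sum_le_sum
        intro t ht
        rw [Finset.mem_range] at ht
        rw [← mul_sub, abs_mul]
        have hcos : |Real.cos (t * θ) - Real.cos (t * ((n:ℝ) * Real.pi / M))| ≤
            (t:ℝ) * (Real.pi / (2 * M)) := by
          calc |Real.cos (t * θ) - Real.cos (t * ((n:ℝ) * Real.pi / M))|
              ≤ |(t:ℝ) * θ - (t:ℝ) * ((n:ℝ) * Real.pi / M)| :=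
                cos_lip ((t:ℝ) * θ) ((t:ℝ) * ((n:ℝ) * Real.pi / M))
            _ = (t:ℝ) * |θ - (n:ℝ) * Real.pi / M| := by
                rw [← mul_sub, abs_mul, abs_of_nonneg (Nat.cast_nonneg t)]
            _ ≤ (t:ℝ) * (Real.pi / (2 * M)) := by
                apply mul_le_mul_of_nonneg_left hdist (Nat.cast_nonneg t)
        have htm : (t:ℝ) ≤ (m:ℝ) - 1 := by
          have : (t:ℝ) ≤ (m:ℝ) - 1 := by
            have : t ≤ m - 1 := Nat.le_sub_one_of_lt ht
            have := (Nat.cast_le (α := ℝ)).mpr this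
            rwa [Nat.cast_sub hm, Nat.cast_one] at this
          exact this
        calc |g t| * |Real.cos (t * θ) - Real.cos (t * ((n:ℝ) * Real.pi / M))|
            ≤ (h₀ * h ^ t) * ((t:ℝ) * (Real.pi / (2 * M))) := by
              apply mul_le_mul (hg t ht) hcos (abs_nonneg _) (by positivity)
          _ ≤ (h₀ * h ^ t) * (((m:ℝ) - 1) * (Real.pi / (2 * M))) := by
              apply mul_le_mul_of_nonneg_left _ (by positivity)
              exact mul_le_mul_of_nonneg_right htm (by positivity)
          _ = h₀ * h ^ t * ((m:ℝ) - 1) * (Real.pi / (2 * M)) := by ring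
    _ = Real.pi * h₀ * (∑ t ∈ Finset.range m, h ^ t) * ((m : ℝ) - 1) / (2 * M) := by
        rw [← Finset.sum_mul, ← Finset.sum_mul, ← Finset.mul_sum]
        ring
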